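/- Let V be a simple nontrivial module over g = Der(ℂ[t_1,…,t_n]). If there exists a nonzero vector u ∈ V with g_{≥0}·u = 0, then V is one-dimensional and hence trivial; consequently any nontrivial simple smooth g-module V satisfies V^{(0)} = 0, i.e., its height ℓ_V is at least 1. -/

import Mathlib

set_option synthInstance.maxHeartbeats 1000000
set_option maxHeartbeats 4000000

open MvPolynomial TensorProduct

noncomputable section

/-- The polynomial ring `ℂ[t₁,…,tₙ]`. -/
abbrev Rn (n : ℕ) := MvPolynomial (Fin n) ℂ

/-- The Witt algebra `g = Der ℂ[t₁,…,tₙ]` of polynomial vector fields. -/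
abbrev Wn (n : ℕ) := Derivation ℂ (Rn n) (Rn n)

/-- The derivation `t^α ∂ᵢ`. -/
def elt (n : ℕ) (α : Fin n →₀ ℕ) (i : Fin n) : Wn n := (monomial α (1:ℂ)) • pderiv i

/-- The size `|α| = α₁ + ⋯ + αₙ` of a multi-index, as an integer. -/
def degOf (n : ℕ) (α : Fin n →₀ ℕ) : ℤ := ((α.sum fun _ m => m : ℕ) : ℤ)

/-- The degree-`k` component `g_k = span{t^α ∂ᵢ : |α| = k+1}`. -/
def gComp (n : ℕ) (k : ℤ) : Submodule ℂ (Wn n) :=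
  Submodule.span ℂ {x | ∃ α i, degOf n α = k + 1 ∧ x = elt n α i}

/-- The subspace `g_{≥r} = ⨁_{k ≥ r} g_k`. -/
def gGe (n : ℕ) (r : ℤ) : Submodule ℂ (Wn n) := ⨆ k ≥ r, gComp n k

namespace HeightAux

/-- The size of a multi-index as a natural number. -/
def sz {n : ℕ} (α : Fin n →₀ ℕ) : ℕ := α.sum fun _ m => m

lemma degOf_eq (n : ℕ) (α : Fin n →₀ ℕ) : degOf n α = (sz α : ℤ) := rfl

lemma sz_eq_zero {n : ℕ} {α : Fin n →₀ ℕ} (h : sz α = 0) : α = 0 := by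
  ext j
  by_cases hj : j ∈ α.support
  · have := Finset.sum_eq_zero_iff.mp h j hj
    simpa using this
  · simpa using Finsupp.notMem_support_iff.mp hj

lemma elt_zero (n : ℕ) (i : Fin n) : elt n 0 i = pderiv i := by
  simp [elt]

lemma elt_mem_gGe0 {n : ℕ} {α : Fin n →₀ ℕ} (hα : sz α ≠ 0) (i : Fin n) :
    elt n α i ∈ gGe n 0 := by
  have h1 : elt n α i ∈ gComp n ((sz α : ℤ) - 1) :=
    Submodule.subset_span ⟨α, i, by rw [degOf_eq]; ring, rfl⟩
  have h2 : gComp n ((sz α : ℤ) - 1) ≤ gGe n 0 := by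
    refine le_iSup₂ (f := fun k (_ : k ≥ (0:ℤ)) => gComp n k) ((sz α : ℤ) - 1) ?_
    have : (1:ℤ) ≤ (sz α : ℤ) := by exact_mod_cast Nat.one_le_iff_ne_zero.mpr hα
    omega
  exact h2 h1

lemma deriv_sum_apply {R A M : Type*} [CommSemiring R] [CommSemiring A] [Algebra R A]
    [AddCommMonoid M] [Module A M] [Module R M] {ι : Type*} (s : Finset ι)
    (D : ι → Derivation R A M) (a : A) : (∑ i ∈ s, D i) a = ∑ i ∈ s, D i a := by
  have := congrFun (map_sum (Derivation.coeFnAddMonoidHom (R := R) (A := A) (M := M)) D s) a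
  exact this.trans (Finset.sum_apply a s fun i => ⇑(D i))

lemma span_elt (n : ℕ) (x : Wn n) :
    x ∈ Submodule.span ℂ {y : Wn n | ∃ α i, y = elt n α i} := by
  classical
  have hx : x = ∑ i : Fin n, (x (X i)) • (pderiv i : Wn n) := by
    apply derivation_ext
    intro j
    rw [deriv_sum_apply]
    simp [Derivation.smul_apply, pderiv_X, Pi.single_apply, Finset.sum_ite_eq']
  rw [hx]
  refine Submodule.sum_mem _ fun i _ => ?_
  induction (x (X i)) using MvPolynomial.induction_on' with
  | monomial α c =>
    have : (monomial α c) • (pderiv i : Wn n) = c • elt n α i := by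
      rw [elt, ← smul_assoc]
      congr 1
      simp [smul_eq_C_mul, C_mul_monomial]
    rw [this]
    exact Submodule.smul_mem _ _ (Submodule.subset_span ⟨α, i, rfl⟩)
  | add p q hp hq =>
    rw [add_smul]
    exact Submodule.add_mem _ hp hq

lemma sz_sub_single {n : ℕ} {α : Fin n →₀ ℕ} {j : Fin n} (h : α j ≠ 0) :
    sz (α - Finsupp.single j 1) + 1 = sz α := by
  classical
  have hle : Finsupp.single j 1 ≤ α := by
    rw [Finsupp.single_le_iff]; omega
  have hα : (α - Finsupp.single j 1) + Finsupp.single j 1 = α := tsub_add_cancel_of_le hle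
  have : sz ((α - Finsupp.single j 1) + Finsupp.single j 1)
      = sz (α - Finsupp.single j 1) + sz (Finsupp.single j 1) := by
    unfold sz
    rw [Finsupp.sum_add_index (by simp) (by simp)]
  rw [hα] at this
  rw [this]
  congr 1
  simp [sz, Finsupp.sum_single_index]

lemma deriv_nsmul_apply {n : ℕ} (m : ℕ) (D : Wn n) (a : Rn n) : (m • D) a = m • D a :=
  congrFun (map_nsmul (Derivation.coeFnAddMonoidHom (R := ℂ) (A := Rn n) (M := Rn n)) m D) a

lemma bracket_elt_pderiv (n : ℕ) (α : Fin n →₀ ℕ) (i j : Fin n) :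
    ⁅elt n α i, (pderiv j : Wn n)⁆
      = -((α j) • elt n (α - Finsupp.single j 1) i) := by
  classical
  apply derivation_ext
  intro k
  rw [Derivation.commutator_apply, Derivation.neg_apply, deriv_nsmul_apply]
  simp only [elt, Derivation.smul_apply, pderiv_X, Pi.single_apply]
  by_cases hik : i = k
  · subst hik
    simp [apply_ite (pderiv i), apply_ite (pderiv j), pderiv_one, pderiv_monomial,
      smul_monomial, nsmul_eq_mul, mul_comm]
  · simp [apply_ite (pderiv j), apply_ite (pderiv i), pderiv_one, Ne.symm hik]

lemma nsmul_lie' {n : ℕ} {V : Type} [AddCommGroup V] [Module ℂ V]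
    [LieRingModule (Wn n) V] [LieModule ℂ (Wn n) V] (k : ℕ) (x : Wn n) (w : V) :
    ⁅(k • x : Wn n), w⁆ = k • ⁅x, w⁆ :=
  map_nsmul (AddMonoidHom.mk' (fun x : Wn n => ⁅x, w⁆) (fun a b => add_lie a b w)) k x

lemma sz_single {n : ℕ} (i : Fin n) : sz (Finsupp.single i 1) = 1 := by
  simp [sz, Finsupp.sum_single_index]

/-- The Euler vector field `∑ tᵢ ∂ᵢ`. -/
def Euler (n : ℕ) : Wn n := ∑ i : Fin n, elt n (Finsupp.single i 1) i

lemma Euler_mem_gGe0 (n : ℕ) : Euler n ∈ gGe n 0 :=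
  Submodule.sum_mem _ fun i _ => elt_mem_gGe0 (by rw [sz_single]; omega) i

lemma sum_lie' {n : ℕ} {ι : Type*} (s : Finset ι) (f : ι → Wn n) (y : Wn n) :
    ⁅∑ i ∈ s, f i, y⁆ = ∑ i ∈ s, ⁅f i, y⁆ :=
  map_sum (AddMonoidHom.mk' (fun x : Wn n => ⁅x, y⁆) (fun a b => add_lie a b y)) f s

lemma bracket_Euler_pderiv (n : ℕ) (j : Fin n) :
    ⁅Euler n, (pderiv j : Wn n)⁆ = -(pderiv j : Wn n) := by
  classical
  rw [Euler, sum_lie']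
  rw [Finset.sum_eq_single j]
  · rw [bracket_elt_pderiv]
    simp [elt_zero]
  · intro i _ hij
    rw [bracket_elt_pderiv]
    simp [Finsupp.single_apply, hij]
  · simp

section ModuleSide

variable (n : ℕ) (V : Type) [AddCommGroup V] [Module ℂ V]
  [LieRingModule (Wn n) V] [LieModule ℂ (Wn n) V]

/-- `P u m` is the span of `m`-fold applications of the `∂ᵢ` to `u`. -/
def P (u : V) : ℕ → Submodule ℂ V
  | 0 => Submodule.span ℂ {u}
  | (m+1) => ⨆ j : Fin n, (P u m).map (LieModule.toEnd ℂ (Wn n) V (pderiv j))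

variable {n V}

lemma key (u : V) (hu : ∀ x ∈ gGe n 0, ⁅x, u⁆ = 0) :
    ∀ (m : ℕ) (α : Fin n →₀ ℕ) (i : Fin n) (v : V), v ∈ P n V u m →
      (m < sz α → ⁅elt n α i, v⁆ = 0) ∧
      (sz α ≤ m → ⁅elt n α i, v⁆ ∈ P n V u (m + 1 - sz α)) := by
  intro m
  induction m with
  | zero =>
    intro α i v hv
    obtain ⟨c, rfl⟩ := Submodule.mem_span_singleton.mp hv
    constructor
    · intro hα
      rw [lie_smul, hu _ (elt_mem_gGe0 (by omega) i), smul_zero]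
    · intro hα
      have h0 : α = 0 := sz_eq_zero (by omega)
      subst h0
      rw [lie_smul]
      simp only [sz, Finsupp.sum_zero_index]
      refine Submodule.smul_mem _ _ ?_
      refine le_iSup (fun j : Fin n => (P n V u 0).map (LieModule.toEnd ℂ (Wn n) V (pderiv j)))
        i ?_
      refine ⟨u, Submodule.mem_span_singleton_self u, ?_⟩
      rw [LieModule.toEnd_apply_apply, elt_zero]
  | succ m ih =>
    intro α i v hv
    refine Submodule.iSup_induction _ (motive := fun v =>
      (m + 1 < sz α → ⁅elt n α i, v⁆ = 0) ∧
      (sz α ≤ m + 1 → ⁅elt n α i, v⁆ ∈ P n V u (m + 1 + 1 - sz α))) hv ?_ ?_ ?_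
    · rintro j v ⟨w, hw, rfl⟩
      rw [LieModule.toEnd_apply_apply]
      have hleib : ⁅elt n α i, ⁅(pderiv j : Wn n), w⁆⁆
          = ⁅⁅elt n α i, (pderiv j : Wn n)⁆, w⁆ + ⁅(pderiv j : Wn n), ⁅elt n α i, w⁆⁆ :=
        leibniz_lie _ _ _
      rw [hleib, bracket_elt_pderiv]
      constructor
      · intro hα
        have h1 : ⁅elt n α i, w⁆ = 0 := (ih α i w hw).1 (by omega)
        have h2 : ⁅-((α j) • elt n (α - Finsupp.single j 1) i), w⁆ = 0 := by
          by_cases hαj : α j = 0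
          · simp [hαj]
          · rw [neg_lie, nsmul_lie', (ih _ i w hw).1 (by have := sz_sub_single hαj; omega),
              smul_zero, neg_zero]
        rw [h1, h2, lie_zero, add_zero]
      · intro hα
        refine Submodule.add_mem _ ?_ ?_
        · by_cases hαj : α j = 0
          · simp [hαj]
          · rw [neg_lie, nsmul_lie', ← Nat.cast_smul_eq_nsmul ℂ]
            refine Submodule.neg_mem _ (Submodule.smul_mem _ _ ?_)
            have hsz := sz_sub_single hαj
            have hmem := (ih (α - Finsupp.single j 1) i w hw).2 (by omega)
            have : m + 1 - sz (α - Finsupp.single j 1) = m + 1 + 1 - sz α := by omega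
            rwa [this] at hmem
        · rcases Nat.lt_or_ge m (sz α) with hlt | hge
          · have h1 : ⁅elt n α i, w⁆ = 0 := (ih α i w hw).1 hlt
            rw [h1, lie_zero]
            exact Submodule.zero_mem _
          · have hmem := (ih α i w hw).2 hge
            have hstep : (P n V u (m + 1 - sz α)).map
                (LieModule.toEnd ℂ (Wn n) V (pderiv j)) ≤ P n V u (m + 1 + 1 - sz α) := by
              have : m + 1 + 1 - sz α = (m + 1 - sz α) + 1 := by omega
              rw [this]
              exact le_iSup (fun j : Fin n => (P n V u (m + 1 - sz α)).map
                (LieModule.toEnd ℂ (Wn n) V (pderiv j))) j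
            exact hstep ⟨_, hmem, rfl⟩
    · exact ⟨fun _ => lie_zero _, fun _ => by rw [lie_zero]; exact Submodule.zero_mem _⟩
    · rintro v w ⟨hv1, hv2⟩ ⟨hw1, hw2⟩
      refine ⟨fun h => by rw [lie_add, hv1 h, hw1 h, add_zero],
        fun h => by rw [lie_add]; exact Submodule.add_mem _ (hv2 h) (hw2 h)⟩

lemma eigen (u : V) (hu : ∀ x ∈ gGe n 0, ⁅x, u⁆ = 0) :
    ∀ m : ℕ, P n V u m ≤
      Module.End.eigenspace (LieModule.toEnd ℂ (Wn n) V (Euler n)) (-(m : ℂ)) := by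
  intro m
  induction m with
  | zero =>
    rw [P, Submodule.span_le, Set.singleton_subset_iff]
    rw [SetLike.mem_coe, Module.End.mem_eigenspace_iff]
    rw [LieModule.toEnd_apply_apply, hu _ (Euler_mem_gGe0 n)]
    simp
  | succ m ih =>
    rw [P]
    refine iSup_le fun j => ?_
    rintro v ⟨w, hw, rfl⟩
    rw [Module.End.mem_eigenspace_iff]
    have hw' : ⁅Euler n, w⁆ = (-(m : ℂ)) • w := Module.End.mem_eigenspace_iff.mp (ih hw)
    rw [LieModule.toEnd_apply_apply, LieModule.toEnd_apply_apply]
    rw [leibniz_lie, bracket_Euler_pderiv, neg_lie, hw', lie_smul]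
    push_cast
    rw [neg_add, add_smul, neg_smul, neg_smul, one_smul]
    abel

end ModuleSide

end HeightAux

/-- Let `V` be a simple `g`-module. (1) If some nonzero `u ∈ V` satisfies `g_{≥0}·u = 0`,
then `V` is one-dimensional and trivial.  (2) Consequently, a nontrivial simple smooth
`g`-module has `V^{(0)} = 0`, i.e. its height is at least `1`. -/
theorem simple_module_height_ge_one (n : ℕ) (V : Type) [AddCommGroup V] [Module ℂ V]
    [LieRingModule (Wn n) V] [LieModule ℂ (Wn n) V]
    (hsimple : IsSimpleOrder (LieSubmodule ℂ (Wn n) V)) :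
    ((∃ u : V, u ≠ 0 ∧ ∀ x ∈ gGe n 0, ⁅x, u⁆ = 0) →
        Module.rank ℂ V = 1 ∧ ∀ (x : Wn n) (v : V), ⁅x, v⁆ = 0) ∧
    ((∃ (x : Wn n) (v : V), ⁅x, v⁆ ≠ 0) →
      (∀ v : V, ∃ N : ℤ, ∀ x ∈ gGe n N, ⁅x, v⁆ = 0) →
      ∀ u : V, (∀ x ∈ gGe n 0, ⁅x, u⁆ = 0) → u = 0) := by
  classical
  have part1 : (∃ u : V, u ≠ 0 ∧ ∀ x ∈ gGe n 0, ⁅x, u⁆ = 0) →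
      Module.rank ℂ V = 1 ∧ ∀ (x : Wn n) (v : V), ⁅x, v⁆ = 0 := by
    rintro ⟨u, hu0, hu⟩
    set T := LieModule.toEnd ℂ (Wn n) V (HeightAux.Euler n) with hT
    set W : Submodule ℂ V := ⨆ m : ℕ, HeightAux.P n V u (m+1) with hWdef
    have hWlie : ∀ (v : V), v ∈ W → ∀ x : Wn n, ⁅x, v⁆ ∈ W := by
      intro v hv
      refine Submodule.iSup_induction _ (motive := fun v => ∀ x : Wn n, ⁅x, v⁆ ∈ W) hv ?_ ?_ ?_
      · intro m v hvm x
        have hx := HeightAux.span_elt n x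
        induction hx using Submodule.span_induction with
        | mem y hy =>
          obtain ⟨α, i, rfl⟩ := hy
          rcases le_or_gt (HeightAux.sz α) (m+1) with hle | hgt
          · have hmem := (HeightAux.key u hu (m+1) α i v hvm).2 hle
            have heq : m + 1 + 1 - HeightAux.sz α = (m + 1 - HeightAux.sz α) + 1 := by omega
            rw [heq] at hmem
            exact le_iSup (fun m : ℕ => HeightAux.P n V u (m+1)) (m + 1 - HeightAux.sz α) hmem
          · rw [(HeightAux.key u hu (m+1) α i v hvm).1 hgt]
            exact W.zero_mem
        | zero => rw [zero_lie]; exact W.zero_mem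
        | add a b _ _ ha hb => rw [add_lie]; exact W.add_mem ha hb
        | smul c a _ ha => rw [smul_lie]; exact W.smul_mem c ha
      · intro x; rw [lie_zero]; exact W.zero_mem
      · intro v w hv hw x
        rw [lie_add]; exact W.add_mem (hv x) (hw x)
    set LW : LieSubmodule ℂ (Wn n) V :=
      { W with lie_mem := fun {x m} hm => hWlie m hm x } with hLW
    have huW : u ∉ W := by
      intro huW
      have hTu : u ∈ Module.End.eigenspace T 0 := by
        rw [Module.End.mem_eigenspace_iff, hT, LieModule.toEnd_apply_apply,
          hu _ (HeightAux.Euler_mem_gGe0 n)]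
        simp
      have hle : W ≤ ⨆ μ : ℂ, ⨆ _ : μ ≠ 0, Module.End.eigenspace T μ := by
        refine iSup_le fun m => le_trans (HeightAux.eigen u hu (m+1)) ?_
        refine le_iSup₂ (f := fun (μ : ℂ) (_ : μ ≠ 0) => Module.End.eigenspace T μ)
          (-((m+1 : ℕ) : ℂ)) ?_
        simp only [ne_eq, neg_eq_zero, Nat.cast_eq_zero]
        omega
      have hdisj := Module.End.independent_genEigenspace T 1
      rw [iSupIndep_def] at hdisj
      exact hu0 ((Submodule.disjoint_def.mp (hdisj 0)) u hTu (hle huW))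
    have hLWne : LW ≠ ⊤ := by
      intro h
      apply huW
      have hmem : u ∈ LW := by rw [h]; exact LieSubmodule.mem_top u
      exact hmem
    have hLWbot : LW = ⊥ := (hsimple.eq_bot_or_eq_top LW).resolve_right hLWne
    have hWbot : W = ⊥ := by
      have := congrArg (fun N : LieSubmodule ℂ (Wn n) V => (N : Submodule ℂ V)) hLWbot
      simpa only [LieSubmodule.bot_toSubmodule] using this
    have hDu : ∀ j : Fin n, ⁅(pderiv j : Wn n), u⁆ = 0 := by
      intro j
      have h1 : ⁅(pderiv j : Wn n), u⁆ ∈ HeightAux.P n V u 1 := by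
        refine le_iSup (fun j : Fin n =>
          (HeightAux.P n V u 0).map (LieModule.toEnd ℂ (Wn n) V (pderiv j))) j ?_
        exact ⟨u, Submodule.mem_span_singleton_self u, by rw [LieModule.toEnd_apply_apply]⟩
      have h2 : ⁅(pderiv j : Wn n), u⁆ ∈ W :=
        le_iSup (fun m : ℕ => HeightAux.P n V u (m+1)) 0 h1
      rw [hWbot] at h2
      exact (Submodule.mem_bot ℂ).mp h2
    have hall : ∀ x : Wn n, ⁅x, u⁆ = 0 := by
      intro x
      have hx := HeightAux.span_elt n x
      induction hx using Submodule.span_induction with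
      | mem y hy =>
        obtain ⟨α, i, rfl⟩ := hy
        by_cases hsz : HeightAux.sz α = 0
        · rw [HeightAux.sz_eq_zero hsz, HeightAux.elt_zero]
          exact hDu i
        · exact hu _ (HeightAux.elt_mem_gGe0 hsz i)
      | zero => rw [zero_lie]
      | add a b _ _ ha hb => rw [add_lie, ha, hb, add_zero]
      | smul c a _ ha => rw [smul_lie, ha, smul_zero]
    have hspan : ∀ v : V, ∃ c : ℂ, c • u = v := by
      set N : LieSubmodule ℂ (Wn n) V :=
        { Submodule.span ℂ {u} with
          lie_mem := by
            intro x m hm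
            obtain ⟨c, rfl⟩ := Submodule.mem_span_singleton.mp hm
            have : ⁅x, c • u⁆ = 0 := by rw [lie_smul, hall, smul_zero]
            exact this ▸ (Submodule.span ℂ {u}).zero_mem } with hN
      have hNne : N ≠ ⊥ := by
        intro h
        apply hu0
        have hmem : u ∈ N := Submodule.mem_span_singleton_self u
        rw [h] at hmem
        exact (LieSubmodule.mem_bot _).mp hmem
      have hNtop : N = ⊤ := (hsimple.eq_bot_or_eq_top N).resolve_left hNne
      intro v
      have hv : v ∈ N := hNtop ▸ LieSubmodule.mem_top v
      exact Submodule.mem_span_singleton.mp hv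
    refine ⟨rank_eq_one u hu0 hspan, ?_⟩
    intro x v
    obtain ⟨c, rfl⟩ := hspan v
    rw [lie_smul, hall, smul_zero]
  refine ⟨part1, ?_⟩
  rintro ⟨x, v, hxv⟩ _ u hu
  by_contra h0
  exact hxv ((part1 ⟨u, h0, hu⟩).2 x v)
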